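/- Let n, m be natural numbers and let v : Fin (m+1) → EuclideanSpace ℝ (Fin n). Let G : Matrix (Fin (m+1)) (Fin (m+1)) ℝ be the Gram matrix G i j = ⟪v i, v j⟫, and let G' : Matrix (Fin m) (Fin m) ℝ be the Gram matrix of the first m vectors, G' i j = ⟪v (Fin.castSucc i), v (Fin.castSucc j)⟫. Let S = Submodule.span ℝ { v (Fin.castSucc i) : i ∈ Fin m } and let d = Metric.infDist (v (Fin.last m)) S (the distance from the last vector to the span of the others). Then det G = d^2 * det G'. -/

import Mathlib

open Metric Matrix in
/-- base-times-height recursion for Gram determinants: for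
vectors `v 0, …, v m` in `ℝⁿ`, the Gram determinant of the whole family equals
the squared distance from the last vector to the span of the others times the
Gram determinant of the first `m` vectors. -/
theorem gram_det_eq_dist_sq_mul_gram_det
    (n m : ℕ) (v : Fin (m + 1) → EuclideanSpace ℝ (Fin n))
    (G : Matrix (Fin (m + 1)) (Fin (m + 1)) ℝ)
    (hG : ∀ i j, G i j = inner ℝ (v i) (v j))
    (G' : Matrix (Fin m) (Fin m) ℝ)
    (hG' : ∀ i j, G' i j = inner ℝ (v (Fin.castSucc i)) (v (Fin.castSucc j)))
    (S : Submodule ℝ (EuclideanSpace ℝ (Fin n)))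
    (hS : S = Submodule.span ℝ (Set.range fun i : Fin m => v (Fin.castSucc i)))
    (d : ℝ) (hd : d = Metric.infDist (v (Fin.last m)) (S : Set (EuclideanSpace ℝ (Fin n)))) :
    G.det = d ^ 2 * G'.det := by
  classical
  set x : EuclideanSpace ℝ (Fin n) := v (Fin.last m) with hx
  set p := (S.starProjection x : EuclideanSpace ℝ (Fin n)) with hp
  set q := x - p with hq
  -- distance equals ‖q‖
  have hdq : d = ‖q‖ := by
    rw [hd, Metric.infDist_eq_iInf]
    rw [hq, hp, Submodule.starProjection_minimal]
    simp [dist_eq_norm]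
  -- q orthogonal to S
  have hqS : ∀ y ∈ S, inner ℝ q y = (0 : ℝ) := by
    intro y hy
    have := Submodule.sub_starProjection_mem_orthogonal (K := S) x
    exact (Submodule.mem_orthogonal' S q).mp this y hy
  -- p is a combination of the first m vectors
  have hpS : p ∈ S := S.starProjection_apply_mem x
  rw [hS] at hpS
  obtain ⟨c, hc⟩ := (Submodule.mem_span_range_iff_exists_fun ℝ).mp hpS
  -- the elementary row-operation matrix
  set c' : Fin (m + 1) → ℝ := Fin.snoc c 0 with hc'
  set A : Matrix (Fin (m + 1)) (Fin (m + 1)) ℝ :=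
    Matrix.of fun i j => (if i = j then (1 : ℝ) else 0) - (if i = Fin.last m then c' j else 0)
    with hA
  have hclast : c' (Fin.last m) = 0 := Fin.snoc_last _ _
  have hccast : ∀ i : Fin m, c' (Fin.castSucc i) = c i := fun i => Fin.snoc_castSucc _ _ i
  have hAdet : A.det = 1 := by
    have htri : A.BlockTriangular OrderDual.toDual := by
      intro i j hij
      have hij' : i < j := hij
      have h1 : i ≠ j := ne_of_lt hij'
      have h : i ≠ Fin.last m := by
        intro h
        exact absurd (h ▸ hij') (not_lt.mpr (Fin.le_last j))
      simp [hA, h1, h]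
    rw [Matrix.det_of_lowerTriangular A htri]
    apply Finset.prod_eq_one
    intro i _
    by_cases h : i = Fin.last m
    · simp [hA, h, hclast]
    · simp [hA, h]
  -- the modified family of vectors
  set w : Fin (m + 1) → EuclideanSpace ℝ (Fin n) := fun i => ∑ k, A i k • v k with hw
  have hwcast : ∀ i : Fin m, w (Fin.castSucc i) = v (Fin.castSucc i) := by
    intro i
    have hne : Fin.castSucc i ≠ Fin.last m := (Fin.castSucc_lt_last i).ne
    rw [hw]
    simp only [hA, Matrix.of_apply, hne, if_false, sub_zero, ite_smul, one_smul, zero_smul]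
    simp
  have hwlast : w (Fin.last m) = q := by
    rw [hq, ← hc, hw]
    simp only [hA, Matrix.of_apply, if_pos rfl, sub_smul, ite_smul, one_smul, zero_smul]
    rw [Finset.sum_sub_distrib]
    congr 1
    · simp [hx]
    · rw [Fin.sum_univ_castSucc]
      simp [hccast, hclast]
  -- the conjugated Gram matrix is the Gram matrix of `w`
  have hH : ∀ i j, (A * G * Aᵀ) i j = inner ℝ (w i) (w j) := by
    intro i j
    rw [hw]
    simp only [Matrix.mul_apply, Matrix.transpose_apply, sum_inner, inner_sum,
      real_inner_smul_left, real_inner_smul_right, Finset.sum_mul, Finset.mul_sum, hG]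
    exact Finset.sum_congr rfl fun k _ => Finset.sum_congr rfl fun l _ => by ring
  -- membership facts
  have hmem : ∀ i : Fin m, v (Fin.castSucc i) ∈ S := by
    intro i
    rw [hS]
    exact Submodule.subset_span ⟨i, rfl⟩
  -- entries of the conjugated matrix
  have hHcast : ∀ i j : Fin m, (A * G * Aᵀ) (Fin.castSucc i) (Fin.castSucc j) = G' i j := by
    intro i j
    rw [hH, hwcast, hwcast, hG']
  have hHlastcast : ∀ j : Fin m, (A * G * Aᵀ) (Fin.last m) (Fin.castSucc j) = 0 := by
    intro j
    rw [hH, hwlast, hwcast]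
    exact hqS _ (hmem j)
  have hHcastlast : ∀ i : Fin m, (A * G * Aᵀ) (Fin.castSucc i) (Fin.last m) = 0 := by
    intro i
    rw [hH, hwcast, hwlast, real_inner_comm]
    exact hqS _ (hmem i)
  have hHlast : (A * G * Aᵀ) (Fin.last m) (Fin.last m) = ‖q‖ ^ 2 := by
    rw [hH, hwlast]
    exact real_inner_self_eq_norm_sq q
  -- block decomposition
  have hblock : (A * G * Aᵀ).submatrix finSumFinEquiv finSumFinEquiv =
      Matrix.fromBlocks G' 0 0 (Matrix.of fun _ _ : Fin 1 => ‖q‖ ^ 2) := by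
    ext i j
    cases i with
    | inl i =>
      cases j with
      | inl j => simp; exact hHcast i j
      | inr j =>
        have : finSumFinEquiv (Sum.inr j) = Fin.last m := by
          apply Fin.ext
          simp [Fin.last, Subsingleton.elim j 0]
        simp only [Matrix.submatrix_apply, finSumFinEquiv_apply_left, this]
        simp; exact hHcastlast i
    | inr i =>
      have hi : finSumFinEquiv (Sum.inr i) = Fin.last m := by
        apply Fin.ext
        simp [Fin.last, Subsingleton.elim i 0]
      cases j with
      | inl j =>
        simp only [Matrix.submatrix_apply, finSumFinEquiv_apply_left, hi]
        simp; exact hHlastcast j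
      | inr j =>
        have hj : finSumFinEquiv (Sum.inr j) = Fin.last m := by
          apply Fin.ext
          simp [Fin.last, Subsingleton.elim j 0]
        simp only [Matrix.submatrix_apply, hi, hj]
        simpa using hHlast
  -- put everything together
  have hdet : (A * G * Aᵀ).det = ‖q‖ ^ 2 * G'.det := by
    rw [← Matrix.det_submatrix_equiv_self finSumFinEquiv, hblock,
      Matrix.det_fromBlocks_zero₂₁]
    simp [Matrix.det_fin_one, mul_comm]
  have : G.det = (A * G * Aᵀ).det := by
    rw [Matrix.det_mul, Matrix.det_mul, Matrix.det_transpose, hAdet]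
    ring
  rw [this, hdet, hdq]
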